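/- Under the same hypotheses (L-smooth, PL with constant μ, noise bound with parameter β), if a backtracking Armijo line search halves the stepsize whenever ℓ_B(x_t - α∇ℓ_B(x_t)) > ℓ_B(x_t) - cα||∇ℓ_B(x_t)||² fails, then every stepsize produced satisfies α_t = α_0 or α_t ≥ 1/(2βL), and consequently E[ℓ(x_{t+1}) - ℓ(x*)] ≤ (1 - 2cμ·min(α_0, 1/(2βL))) E[ℓ(x_t) - ℓ(x*)]. If α_0 ≥ 1/(2βL), the contraction factor is 1 - cμ/(βL). -/

import Mathlib

open MeasureTheory
open scoped RealInnerProductSpace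

private lemma bbb_aux1 (L a β c N E2 lx : ℝ) (hL : 0 < L) (ha : 0 < a)
    (hN : 0 ≤ N) (hc : c ≤ 1 / 2) (hE : E2 ≤ (β - 1) * N) (haβL : a * (β * L) ≤ 1) :
    lx - a * N + L / 2 * a ^ 2 * N + L / 2 * a ^ 2 * E2 ≤ lx - c * a * N := by
  have h1 : L / 2 * a ^ 2 * E2 ≤ L / 2 * a ^ 2 * ((β - 1) * N) :=
    mul_le_mul_of_nonneg_left hE (by positivity)
  have h2 : a * (β * L) * (a * N) ≤ 1 * (a * N) :=
    mul_le_mul_of_nonneg_right haβL (by positivity)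
  have h3 : c * (a * N) ≤ 1 / 2 * (a * N) :=
    mul_le_mul_of_nonneg_right hc (by positivity)
  nlinarith [h1, h2, h3]

private lemma bbb_aux2 (c αt m mu N lx lst : ℝ) (hc0 : 0 < c) (hαt : 0 < αt)
    (hmu : 0 < mu) (hm : m ≤ αt) (hΔ : 0 ≤ lx - lst)
    (hPL : 2 * mu * (lx - lst) ≤ N) :
    lx - c * αt * N - lst ≤ (1 - 2 * c * mu * m) * (lx - lst) := by
  have h1 : c * αt * (2 * mu * (lx - lst)) ≤ c * αt * N :=
    mul_le_mul_of_nonneg_left hPL (by positivity)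
  have h2 : c * m * (2 * mu * (lx - lst)) ≤ c * αt * (2 * mu * (lx - lst)) := by
    apply mul_le_mul_of_nonneg_right _ (by positivity)
    exact mul_le_mul_of_nonneg_left hm (le_of_lt hc0)
  nlinarith [h1, h2]

/-- Big batch SGD with backtracking Armijo line search: starting from `α₀` and halving
the stepsize until the (expected) Armijo condition holds, the accepted stepsize `αt`
satisfies `αt = α₀` or `αt ≥ 1/(2βL)`, and the expected optimality gap contracts by
`1 - 2cμ min(α₀, 1/(2βL))`; if `α₀ ≥ 1/(2βL)` the factor is `1 - cμ/(βL)`. -/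
theorem big_batch_backtracking {d : ℕ} {Ω : Type*} [MeasurableSpace Ω]
    (P : Measure Ω) [IsProbabilityMeasure P]
    (ℓ : EuclideanSpace ℝ (Fin d) → ℝ) (g : EuclideanSpace ℝ (Fin d) → EuclideanSpace ℝ (Fin d))
    (L mu : ℝ) (hL : 0 < L) (hmu : 0 < mu)
    (hsmooth : ∀ x y, ℓ x ≤ ℓ y + ⟪g y, x - y⟫ + L / 2 * ‖x - y‖ ^ 2)
    (xstar : EuclideanSpace ℝ (Fin d)) (hmin : ∀ x, ℓ xstar ≤ ℓ x)
    (hPL : ∀ x, 2 * mu * (ℓ x - ℓ xstar) ≤ ‖g x‖ ^ 2)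
    (θ : ℝ) (hθ : θ ∈ Set.Ioo (0 : ℝ) 1)
    (β : ℝ) (hβ : β = (θ ^ 2 + (1 - θ) ^ 2) / (1 - θ) ^ 2)
    (xt : EuclideanSpace ℝ (Fin d))
    (e : Ω → EuclideanSpace ℝ (Fin d))
    (he : Integrable e P) (hemean : ∫ ω, e ω ∂P = 0)
    (he2 : Integrable (fun ω => ‖e ω‖ ^ 2) P)
    (hnoise : ∫ ω, ‖e ω‖ ^ 2 ∂P ≤ θ ^ 2 / (1 - θ) ^ 2 * ‖g xt‖ ^ 2)
    (c : ℝ) (hc0 : 0 < c) (hc : c ≤ 1 / 2)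
    (hint : ∀ a : ℝ, Integrable (fun ω => ℓ (xt - a • (g xt + e ω))) P)
    -- the expected Armijo condition used by the line search
    (A : ℝ → Prop)
    (hA : ∀ a : ℝ, A a ↔
      ∫ ω, ℓ (xt - a • (g xt + e ω)) ∂P ≤ ℓ xt - c * a * ‖g xt‖ ^ 2)
    (α0 : ℝ) (hα0 : 0 < α0)
    -- `αt` is produced by halving `α0` until the Armijo condition first holds
    (αt : ℝ) (n : ℕ) (hαt : αt = α0 / 2 ^ n) (hAαt : A αt)
    (hminimal : ∀ m : ℕ, m < n → ¬ A (α0 / 2 ^ m)) :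
    (αt = α0 ∨ 1 / (2 * β * L) ≤ αt)
    ∧ (∫ ω, (ℓ (xt - αt • (g xt + e ω)) - ℓ xstar) ∂P
        ≤ (1 - 2 * c * mu * min α0 (1 / (2 * β * L))) * (ℓ xt - ℓ xstar))
    ∧ (1 / (2 * β * L) ≤ α0 →
        ∫ ω, (ℓ (xt - αt • (g xt + e ω)) - ℓ xstar) ∂P
          ≤ (1 - c * mu / (β * L)) * (ℓ xt - ℓ xstar)) := by
  obtain ⟨hθ0, hθ1⟩ := hθ
  have h1θ : (0:ℝ) < (1 - θ) ^ 2 := pow_pos (by linarith) 2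
  have hβeq : β * (1 - θ) ^ 2 = θ ^ 2 + (1 - θ) ^ 2 := by
    rw [hβ]; field_simp
  have ht : θ ^ 2 / (1 - θ) ^ 2 = β - 1 := by
    rw [eq_sub_iff_add_eq, div_add' _ _ _ (ne_of_gt h1θ), div_eq_iff (ne_of_gt h1θ)]
    linarith [hβeq]
  have hβ1 : 1 ≤ β := by nlinarith [sq_nonneg θ]
  have hβL : 0 < β * L := mul_pos (by linarith) hL
  have hN : (0:ℝ) ≤ ‖g xt‖ ^ 2 := sq_nonneg _
  -- the Armijo condition holds for any small positive stepsize
  have key : ∀ a : ℝ, 0 < a → a ≤ 1 / (β * L) → A a := by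
    intro a ha hale
    rw [hA]
    have hei : Integrable (fun ω => ⟪g xt, e ω⟫) P := he.const_inner (g xt)
    have hi3 : Integrable (fun ω => (-a + L * a ^ 2) * ⟪g xt, e ω⟫) P :=
      hei.const_mul _
    have hi1 : Integrable (fun ω =>
        (ℓ xt - a * ‖g xt‖ ^ 2 + L / 2 * a ^ 2 * ‖g xt‖ ^ 2)
          + (-a + L * a ^ 2) * ⟪g xt, e ω⟫) P :=
      (integrable_const _).add hi3
    have hi2 : Integrable (fun ω => L / 2 * a ^ 2 * ‖e ω‖ ^ 2) P := he2.const_mul _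
    have hfi : Integrable (fun ω =>
        (ℓ xt - a * ‖g xt‖ ^ 2 + L / 2 * a ^ 2 * ‖g xt‖ ^ 2)
          + (-a + L * a ^ 2) * ⟪g xt, e ω⟫ + L / 2 * a ^ 2 * ‖e ω‖ ^ 2) P :=
      hi1.add hi2
    have hptw : ∀ ω, ℓ (xt - a • (g xt + e ω)) ≤
        (ℓ xt - a * ‖g xt‖ ^ 2 + L / 2 * a ^ 2 * ‖g xt‖ ^ 2)
          + (-a + L * a ^ 2) * ⟪g xt, e ω⟫ + L / 2 * a ^ 2 * ‖e ω‖ ^ 2 := by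
      intro ω
      have hs := hsmooth (xt - a • (g xt + e ω)) xt
      have hd : xt - a • (g xt + e ω) - xt = -(a • (g xt + e ω)) := by abel
      rw [hd] at hs
      have hi : ⟪g xt, -(a • (g xt + e ω))⟫ = -(a * (‖g xt‖ ^ 2 + ⟪g xt, e ω⟫)) := by
        rw [inner_neg_right, real_inner_smul_right, inner_add_right,
          real_inner_self_eq_norm_sq]
      have hn : ‖-(a • (g xt + e ω))‖ ^ 2
          = a ^ 2 * (‖g xt‖ ^ 2 + 2 * ⟪g xt, e ω⟫ + ‖e ω‖ ^ 2) := by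
        rw [norm_neg, norm_smul, mul_pow, ← norm_add_sq_real]
        simp [abs_of_pos ha]
      rw [hi, hn] at hs
      linarith [hs]
    have hmono := integral_mono (hint a) hfi hptw
    have hinte : ∫ ω, ⟪g xt, e ω⟫ ∂P = 0 := by
      rw [integral_inner he (g xt), hemean, inner_zero_right]
    have hcalc : ∫ ω, ((ℓ xt - a * ‖g xt‖ ^ 2 + L / 2 * a ^ 2 * ‖g xt‖ ^ 2)
          + (-a + L * a ^ 2) * ⟪g xt, e ω⟫ + L / 2 * a ^ 2 * ‖e ω‖ ^ 2) ∂P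
        = (ℓ xt - a * ‖g xt‖ ^ 2 + L / 2 * a ^ 2 * ‖g xt‖ ^ 2)
          + L / 2 * a ^ 2 * ∫ ω, ‖e ω‖ ^ 2 ∂P := by
      rw [integral_add hi1 hi2, integral_add (integrable_const _) hi3,
        integral_const, integral_const_mul, integral_const_mul, hinte]
      simp
    have hE : ∫ ω, ‖e ω‖ ^ 2 ∂P ≤ (β - 1) * ‖g xt‖ ^ 2 := by
      rw [← ht]; exact hnoise
    have haβL : a * (β * L) ≤ 1 := by
      rw [← le_div_iff₀ hβL]; exact hale
    calc ∫ ω, ℓ (xt - a • (g xt + e ω)) ∂P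
        ≤ (ℓ xt - a * ‖g xt‖ ^ 2 + L / 2 * a ^ 2 * ‖g xt‖ ^ 2)
          + L / 2 * a ^ 2 * ∫ ω, ‖e ω‖ ^ 2 ∂P := by rw [← hcalc]; exact hmono
      _ ≤ ℓ xt - c * a * ‖g xt‖ ^ 2 := by
          have := bbb_aux1 L a β c (‖g xt‖ ^ 2) (∫ ω, ‖e ω‖ ^ 2 ∂P) (ℓ xt)
            hL ha hN hc hE haβL
          linarith [this]
  -- part 1
  have part1 : αt = α0 ∨ 1 / (2 * β * L) ≤ αt := by
    cases n with
    | zero => left; simp [hαt]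
    | succ m =>
      right
      have hnm : ¬ A (α0 / 2 ^ m) := hminimal m (Nat.lt_succ_self m)
      have hmp : 0 < α0 / 2 ^ m := by positivity
      have hgt : 1 / (β * L) < α0 / 2 ^ m := by
        by_contra hcon
        exact hnm (key _ hmp (le_of_not_gt hcon))
      have h2m : (0:ℝ) < 2 ^ m := by positivity
      rw [hαt, pow_succ]
      calc 1 / (2 * β * L) = (1 / (β * L)) / 2 := by ring
        _ ≤ (α0 / 2 ^ m) / 2 := by linarith
        _ = α0 / (2 ^ m * 2) := by ring
  have hαtpos : 0 < αt := by rw [hαt]; positivity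
  have hmpos : 0 < min α0 (1 / (2 * β * L)) := lt_min hα0 (by positivity)
  have hmle : min α0 (1 / (2 * β * L)) ≤ αt := by
    rcases part1 with h | h
    · rw [h]; exact min_le_left _ _
    · exact le_trans (min_le_right _ _) h
  have hΔ : 0 ≤ ℓ xt - ℓ xstar := by linarith [hmin xt]
  have hArm := (hA αt).mp hAαt
  have part2 : ∫ ω, (ℓ (xt - αt • (g xt + e ω)) - ℓ xstar) ∂P
      ≤ (1 - 2 * c * mu * min α0 (1 / (2 * β * L))) * (ℓ xt - ℓ xstar) := by
    rw [integral_sub (hint αt) (integrable_const _), integral_const]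
    simp only [probReal_univ, smul_eq_mul, one_mul]
    have h2 := bbb_aux2 c αt (min α0 (1 / (2 * β * L))) mu (‖g xt‖ ^ 2)
      (ℓ xt) (ℓ xstar) hc0 hαtpos hmu hmle hΔ (hPL xt)
    linarith [hArm, h2]
  refine ⟨part1, part2, ?_⟩
  intro hge
  have hmeq : min α0 (1 / (2 * β * L)) = 1 / (2 * β * L) := min_eq_right hge
  have hcoef : 1 - 2 * c * mu * (1 / (2 * β * L)) = 1 - c * mu / (β * L) := by
    field_simp
  rw [hmeq, hcoef] at part2
  exact part2
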